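/- arXiv:1312.2531 — 2 statements merged into one kernel-verified Lean document; each statement's English description precedes it below -/
import Mathlib

section
/- Let v be a vertex of a connected non-atomic finite simple graph G. Then at least one of the following holds: (1) G admits a decomposition {L_1, L_2} into two subgraphs with v ∈ L_1 and v ∈ L_2; or (2) G admits a decomposition {K, L_1, …, L_n} such that K is atomic, v ∈ K, v ∉ L_i for every i, and every L_i shares a vertex with K (so the decomposition graph is a star with center K). -/
open SimpleGraph

/-- The "graph of a decomposition": the intersection graph of a family of subgraphs,
where two distinct members are adjacent iff their vertex sets meet. -/
def decompGraph {V : Type*} {G : SimpleGraph V} {n : ℕ} (D : Fin n → G.Subgraph) :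
    SimpleGraph (Fin n) where
  Adj i j := i ≠ j ∧ ((D i).verts ∩ (D j).verts).Nonempty
  symm := by
    constructor
    intro i j h
    exact ⟨h.1.symm, h.2.imp fun x hx => ⟨hx.2, hx.1⟩⟩
  loopless := ⟨fun i h => h.1 rfl⟩

/-- `D` is a decomposition of the subgraph `H` of `G`: a family of `n ≥ 2` connected
subgraphs of `H`, each containing at least one edge, pairwise sharing no edges and at
most one vertex, whose vertex sets and edge sets union to those of `H`, and whose
intersection graph is a tree. -/
def IsDecompositionOf {V : Type*} {G : SimpleGraph V} (H : G.Subgraph) {n : ℕ}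
    (D : Fin n → G.Subgraph) : Prop :=
  2 ≤ n ∧
  (∀ i, D i ≤ H) ∧
  (∀ i, (D i).Connected) ∧
  (∀ i, (D i).edgeSet.Nonempty) ∧
  (∀ i j, i ≠ j → (D i).edgeSet ∩ (D j).edgeSet = ∅) ∧
  (∀ i j, i ≠ j → ((D i).verts ∩ (D j).verts).Subsingleton) ∧
  (⋃ i, (D i).verts) = H.verts ∧
  (⋃ i, (D i).edgeSet) = H.edgeSet ∧
  (decompGraph D).IsTree

/-- `D` is a decomposition of the graph `G` itself. -/
def IsDecomposition {V : Type*} (G : SimpleGraph V) {n : ℕ} (D : Fin n → G.Subgraph) : Prop :=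
  IsDecompositionOf (⊤ : G.Subgraph) D

/-- A graph is atomic if it is connected, has at least one edge,
and admits no decomposition. -/
def IsAtomicGraph {V : Type*} (G : SimpleGraph V) : Prop :=
  G.Connected ∧ G.edgeSet.Nonempty ∧ ∀ (n : ℕ) (D : Fin n → G.Subgraph), ¬ IsDecomposition G D

section Avoid
variable {ι : Type*} {T : SimpleGraph ι}

/-- reach `y` from `x` while avoiding vertex `c` -/
def Avoids (T : SimpleGraph ι) (c x y : ι) : Prop := ∃ p : T.Walk x y, c ∉ p.support

lemma sym2_ne {x y c : ι} {e : Sym2 ι} (he : c ∈ e) (hx : c ≠ x) (hy : c ≠ y) :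
    s(x,y) ≠ e := by
  intro h
  rw [← h, Sym2.mem_iff] at he
  rcases he with rfl | rfl
  · exact hx rfl
  · exact hy rfl

lemma adj_delete_of_ne {x y : ι} (h : T.Adj x y) {e : Sym2 ι} (hne : s(x,y) ≠ e) :
    (T.deleteEdges {e}).Adj x y := by
  rw [deleteEdges_adj]
  exact ⟨h,fun hmem => hne (Set.mem_singleton_iff.mp hmem)⟩

lemma avoids_ne {x y c : ι} (h : Avoids T c x y) : x ≠ c :=
  fun hxc => h.choose_spec (hxc ▸ h.choose.start_mem_support)

lemma avoids_ne' {x y c : ι} (h : Avoids T c x y) : y ≠ c :=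
  fun hyc => h.choose_spec (hyc ▸ h.choose.end_mem_support)

lemma avoids_delete {x y c : ι} (h : Avoids T c x y) {e : Sym2 ι} (he : c ∈ e) :
    (T.deleteEdges {e}).Reachable x y := by
  obtain ⟨p, hp⟩ := h
  induction p with
  | nil => rfl
  | cons h q ih =>
    rw [SimpleGraph.Walk.support_cons, List.mem_cons, not_or] at hp
    exact ((adj_delete_of_ne h (sym2_ne he (fun h' => hp.1 h') (fun h' => hp.2 (h' ▸ q.start_mem_support)))).reachable).trans (ih hp.2)

lemma avoids_refl {x c : ι} (h : x ≠ c) : Avoids T c x x :=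
  ⟨SimpleGraph.Walk.nil, by simpa using fun h' => h h'.symm⟩

lemma avoids_symm {x y c : ι} (h : Avoids T c x y) : Avoids T c y x := by
  obtain ⟨p, hp⟩ := h
  exact ⟨p.reverse, by simpa using hp⟩

lemma avoids_trans {x y z c : ι} (h : Avoids T c x y) (h' : Avoids T c y z) :
    Avoids T c x z := by
  obtain ⟨p, hp⟩ := h; obtain ⟨q, hq⟩ := h'
  refine ⟨p.append q, fun hmem => ?_⟩
  rw [SimpleGraph.Walk.support_append] at hmem
  rcases List.mem_append.mp hmem with h1 | h1
  · exact hp h1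
  · exact hq (List.mem_of_mem_tail h1)

lemma avoids_cons {x y z c : ι} (h : T.Adj x y) (hxc : x ≠ c) (h' : Avoids T c y z) :
    Avoids T c x z := by
  obtain ⟨p, hp⟩ := h'
  refine ⟨SimpleGraph.Walk.cons h p, ?_⟩
  rw [SimpleGraph.Walk.support_cons, List.mem_cons, not_or]
  exact ⟨fun hc => hxc hc.symm, hp⟩

private lemma avoid_total_aux : ∀ {x y : ι}, (p : T.Walk x y) →
    x = y ∨ ∃ b, T.Adj y b ∧ Avoids T y x b
  | _, _, .nil => Or.inl rfl
  | _, _, @SimpleGraph.Walk.cons _ _ u v w h q => by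
    rcases avoid_total_aux q with rfl | ⟨b, hb, hav⟩
    · by_cases hua : u = v
      · exact Or.inl hua
      · exact Or.inr ⟨u, h.symm, avoids_refl hua⟩
    · by_cases hua : u = w
      · exact Or.inl hua
      · exact Or.inr ⟨b, hb, avoids_cons h hua hav⟩

/-- every vertex is `a` or avoids-reaches some neighbor of `a` -/
lemma avoid_total (hT : T.Connected) (a x : ι) :
    x = a ∨ ∃ b, T.Adj a b ∧ Avoids T a x b := by
  obtain ⟨p⟩ := hT x a
  exact avoid_total_aux p

private lemma avoid_total2_aux : ∀ {x y : ι}, (p : T.Walk x y) → ∀ {b : ι}, T.Adj y b →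
    Avoids T b x y ∨ Avoids T y x b
  | _, _, .nil, b, hab => Or.inl (avoids_refl hab.ne)
  | _, _, @SimpleGraph.Walk.cons _ _ u v w h q, b, hab => by
    rcases avoid_total2_aux q hab with hav | hav
    · by_cases hub : u = b
      · subst hub
        exact Or.inr (avoids_refl hab.ne')
      · exact Or.inl (avoids_cons h hub hav)
    · by_cases hua : u = w
      · subst hua
        exact Or.inl (avoids_refl hab.ne)
      · exact Or.inr (avoids_cons h hua hav)

/-- two-sided version for an edge -/
lemma avoid_total2 (hT : T.Connected) {a b : ι} (hab : T.Adj a b) (x : ι) :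
    Avoids T b x a ∨ Avoids T a x b := by
  obtain ⟨p⟩ := hT x a
  exact avoid_total2_aux p hab

lemma tree_bridge (hT : T.IsTree) {a b : ι} (hab : T.Adj a b) :
    ¬ (T.deleteEdges {s(a,b)}).Reachable a b := by
  have h := (isAcyclic_iff_forall_adj_isBridge.mp hT.IsAcyclic) hab
  rw [isBridge_iff] at h
  exact h

/-- branches at distinct neighbors of `a` do not meet and are non-adjacent -/
lemma avoid_branch_disjoint (hT : T.IsTree) {a b c x y : ι} (hb : T.Adj a b) (hc : T.Adj a c)
    (hbc : b ≠ c) (hx : Avoids T a x b) (hy : Avoids T a y c) (hxy : x = y ∨ T.Adj x y) :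
    False := by
  have hmem : a ∈ s(a,b) := Sym2.mem_mk_left a b
  have h1 : (T.deleteEdges {s(a,b)}).Reachable b c := by
    have hxys : (T.deleteEdges {s(a,b)}).Reachable x y := by
      rcases hxy with rfl | hadj
      · rfl
      · exact (adj_delete_of_ne hadj (sym2_ne hmem (Ne.symm (avoids_ne hx))
          (Ne.symm (avoids_ne hy)))).reachable
    exact ((avoids_delete (avoids_symm hx) hmem).trans hxys).trans (avoids_delete hy hmem)
  have h2 : (T.deleteEdges {s(a,b)}).Adj a c :=
    adj_delete_of_ne hc (fun h => by
      rw [Sym2.eq_iff] at h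
      rcases h with ⟨-, rfl⟩ | ⟨rfl, rfl⟩
      · exact hbc rfl
      · exact hc.ne rfl)
  exact tree_bridge hT hb (h2.reachable.trans h1.symm)

/-- two sides of an edge: crossing pairs must be the edge endpoints -/
lemma avoid_side_cross (hT : T.IsTree) {a b x y : ι} (hab : T.Adj a b)
    (hx : Avoids T b x a) (hy : Avoids T a y b) (hxy : x = y ∨ T.Adj x y) :
    x = a ∧ y = b := by
  have hmem : a ∈ s(a,b) := Sym2.mem_mk_left a b
  have hmem' : b ∈ s(a,b) := Sym2.mem_mk_right a b
  by_contra hcon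
  have hxyne : s(x,y) ≠ s(a,b) := by
    intro h
    rw [Sym2.eq_iff] at h
    rcases h with ⟨rfl, rfl⟩ | ⟨rfl, rfl⟩
    · exact hcon ⟨rfl, rfl⟩
    · exact (avoids_ne hy) rfl
  have hxys : (T.deleteEdges {s(a,b)}).Reachable x y := by
    rcases hxy with rfl | hadj
    · rfl
    · exact (adj_delete_of_ne hadj hxyne).reachable
  exact tree_bridge hT hab (((avoids_delete (avoids_symm hx) hmem').trans hxys).trans
    (avoids_delete hy hmem))
end Avoid

section Conn
variable {V : Type*} {G : SimpleGraph V}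

lemma reach_in {H W : G.Subgraph} (hle : H ≤ W) (hH : H.Connected) {x y : V}
    (hx : x ∈ H.verts) (hy : y ∈ H.verts) (hx' : x ∈ W.verts) (hy' : y ∈ W.verts) :
    W.coe.Reachable ⟨x, hx'⟩ ⟨y, hy'⟩ :=
  (hH ⟨x, hx⟩ ⟨y, hy⟩).map (SimpleGraph.Subgraph.inclusion hle)

lemma connected_attach {H : G.Subgraph} (hH : H.Connected) {κ : Type*} (F : κ → G.Subgraph)
    (hFc : ∀ i, (F i).Connected) (hmeet : ∀ i, ((F i).verts ∩ H.verts).Nonempty) :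
    (H ⊔ ⨆ i, F i).Connected := by
  rw [SimpleGraph.Subgraph.connected_iff', connected_iff_exists_forall_reachable]
  obtain ⟨u0, hu0⟩ := hH.nonempty
  have hle : H ≤ H ⊔ ⨆ i, F i := le_sup_left
  have hFle : ∀ i, F i ≤ H ⊔ ⨆ i, F i := fun i => (le_iSup F i).trans le_sup_right
  refine ⟨⟨u0, hle.1 hu0⟩, ?_⟩
  rintro ⟨w, hw⟩
  have hw' : w ∈ H.verts ∪ ⋃ i, (F i).verts := by
    simpa [SimpleGraph.Subgraph.verts_sup, SimpleGraph.Subgraph.verts_iSup] using hw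
  rcases hw' with hwH | hwF
  · exact reach_in hle hH hu0 hwH _ _
  · obtain ⟨s, ⟨i, rfl⟩, hws⟩ := hwF
    obtain ⟨z, hz1, hz2⟩ := hmeet i
    exact (reach_in hle hH hu0 hz2 _ (hle.1 hz2)).trans
      (reach_in (hFle i) (hFc i) hz1 hws (hle.1 hz2) _)

lemma connected_iSup_avoids {m : ℕ} (D : Fin m → G.Subgraph) (hc : ∀ i, (D i).Connected)
    (c t : Fin m) (hct : t ≠ c) :
    (⨆ x : {x | Avoids (decompGraph D) c x t}, D x.val).Connected := by
  classical
  set T := decompGraph D with hTdef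
  set S : Set (Fin m) := {x | Avoids T c x t} with hSdef
  set W : G.Subgraph := ⨆ x : S, D x.val with hW
  have hle : ∀ x : Fin m, x ∈ S → D x ≤ W := fun x hx => le_iSup (fun x : S => D x.val) ⟨x, hx⟩
  have key : ∀ {x y : Fin m} (p : T.Walk x y), (∀ z ∈ p.support, z ∈ S) →
      ∀ (w : V) (hw : w ∈ (D x).verts) (u : V) (hu : u ∈ (D y).verts)
        (hw' : w ∈ W.verts) (hu' : u ∈ W.verts),
      W.coe.Reachable ⟨w, hw'⟩ ⟨u, hu'⟩ := by
    intro x y p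
    induction p with
    | nil =>
      intro hs w hw u hu hw' hu'
      exact reach_in (hle _ (hs _ (by simp))) (hc _) hw hu _ _
    | @cons x' y' z' h q ih =>
      intro hs w hw u hu hw' hu'
      have hx'S : x' ∈ S := hs _ (by simp)
      have hs' : ∀ z ∈ q.support, z ∈ S := by
        intro z hz
        apply hs
        rw [SimpleGraph.Walk.support_cons]
        exact List.mem_cons_of_mem _ hz
      obtain ⟨z, hz1, hz2⟩ := h.2
      have hzW : z ∈ W.verts := (hle _ hx'S).1 hz1
      exact (reach_in (hle _ hx'S) (hc _) hw hz1 _ hzW).trans (ih hs' z hz2 u hu _ _)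
  rw [SimpleGraph.Subgraph.connected_iff', connected_iff_exists_forall_reachable]
  have htS : t ∈ S := avoids_refl hct
  obtain ⟨u0, hu0⟩ := (hc t).nonempty
  refine ⟨⟨u0, (hle _ htS).1 hu0⟩, ?_⟩
  rintro ⟨w, hw⟩
  rw [hW] at hw
  have hw' : ∃ x : S, w ∈ (D x.val).verts := by
    simpa [SimpleGraph.Subgraph.verts_iSup] using hw
  obtain ⟨⟨x, hxS⟩, hws⟩ := hw'
  obtain ⟨p, hp⟩ := hxS
  have hsupp : ∀ z ∈ p.support, z ∈ S :=
    fun z hz => ⟨p.dropUntil z hz, fun hmem => hp (p.support_dropUntil_subset hz hmem)⟩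
  exact (key p hsupp w hws u0 hu0 _ _).symm

end Conn

section Star
variable {ι : Type*} {T : SimpleGraph ι}

lemma reachable_eq_of_isolated {w : ι} (hiso : ∀ y, ¬T.Adj w y) {x : ι}
    (r : T.Reachable w x) : w = x := by
  obtain ⟨p⟩ := r
  cases p with
  | nil => rfl
  | cons h _ => exact absurd h (hiso _)

/-- the star graph on `Fin (n+1)` centered at `0` -/
def starGraph (n : ℕ) : SimpleGraph (Fin (n + 1)) where
  Adj i j := i ≠ j ∧ (i = 0 ∨ j = 0)
  symm := by
    constructor
    rintro i j ⟨h1, h2⟩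
    exact ⟨h1.symm, h2.symm⟩
  loopless := ⟨fun i h => h.1 rfl⟩

lemma starGraph_isTree (n : ℕ) : (_root_.starGraph n).IsTree := by
  have key : ∀ y : Fin (n+1), y ≠ 0 → ¬((_root_.starGraph n).deleteEdges {s(0,y)}).Reachable 0 y := by
    intro y hy hreach
    have hiso : ∀ z, ¬((_root_.starGraph n).deleteEdges {s(0,y)}).Adj y z := by
      rintro z ⟨⟨hne, h0⟩, hmem⟩
      rcases h0 with h0 | h0
      · exact hy h0
      · subst h0
        rw [fromEdgeSet_adj] at hmem
        exact hmem ⟨Set.mem_singleton_iff.mpr Sym2.eq_swap, hy⟩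
    exact hy (reachable_eq_of_isolated hiso hreach.symm)
  constructor
  · haveI : Nonempty (Fin (n+1)) := ⟨0⟩
    refine ⟨?_⟩
    have h : ∀ i : Fin (n+1), (_root_.starGraph n).Reachable i 0 := by
      intro i
      by_cases hi : i = 0
      · rw [hi]
      · exact (Adj.reachable ⟨hi, Or.inr rfl⟩)
    exact fun i j => (h i).trans (h j).symm
  · rw [isAcyclic_iff_forall_adj_isBridge]
    intro x y hxy
    rw [isBridge_iff]
    rcases hxy.2 with h0 | h0
    · subst h0
      exact key y (Ne.symm hxy.1)
    · subst h0
      rw [Sym2.eq_swap]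
      intro hreach
      exact key x hxy.1 hreach.symm
end Star

section Coe
variable {V : Type*} {G : SimpleGraph V} {K : G.Subgraph}

lemma top_subgraph_connected (h : G.Connected) : (⊤ : G.Subgraph).Connected := by
  rw [SimpleGraph.Subgraph.connected_iff']
  exact (Subgraph.topIso (G := G)).connected_iff.mpr h

lemma coe_edgeSet_nonempty (h : K.edgeSet.Nonempty) : K.coe.edgeSet.Nonempty := by
  obtain ⟨e, he⟩ := h
  induction e with
  | h x y =>
    rw [SimpleGraph.Subgraph.mem_edgeSet] at he
    exact ⟨s(⟨x, K.edge_vert he⟩, ⟨y, K.edge_vert he.symm⟩), by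
      rw [SimpleGraph.mem_edgeSet]; exact he⟩

lemma coeSubgraph_connected {H : K.coe.Subgraph} (h : H.Connected) :
    (Subgraph.coeSubgraph H).Connected := by
  rw [SimpleGraph.Subgraph.connected_iff'] at h ⊢
  refine h.map ⟨fun x => ⟨x.val.val, ⟨x.val, x.2, rfl⟩⟩, ?_⟩ ?_
  · rintro ⟨x, hx⟩ ⟨y, hy⟩ hadj
    exact (Subgraph.coeSubgraph_adj H _ _).mpr ⟨x.2, y.2, hadj⟩
  · rintro ⟨w, hw⟩
    obtain ⟨x, hx, rfl⟩ := hw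
    exact ⟨⟨x, hx⟩, rfl⟩
end Coe
section Transfer
variable {V : Type*} {G : SimpleGraph V} {K : G.Subgraph}

lemma coe_decomposition {m : ℕ} (D' : Fin m → K.coe.Subgraph)
    (h : IsDecomposition K.coe D') :
    IsDecompositionOf K (fun k => Subgraph.coeSubgraph (D' k)) := by
  obtain ⟨h2, -, hconn, hedge, hedj, hvss, hvu, heu, htree⟩ := h
  have hinj : Function.Injective (Subtype.val : K.verts → V) := Subtype.coe_injective
  have hadj : ∀ (k : Fin m) (x y : V), (Subgraph.coeSubgraph (D' k)).Adj x y ↔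
      ∃ (hx : x ∈ K.verts) (hy : y ∈ K.verts), (D' k).Adj ⟨x, hx⟩ ⟨y, hy⟩ :=
    fun k x y => Subgraph.coeSubgraph_adj (D' k) x y
  refine ⟨h2, fun k => Subgraph.coeSubgraph_le _, fun k => coeSubgraph_connected (hconn k),
      ?_, ?_, ?_, ?_, ?_, ?_⟩
  · intro k
    obtain ⟨e, he⟩ := hedge k
    induction e with
    | h x y =>
      rw [SimpleGraph.Subgraph.mem_edgeSet] at he
      exact ⟨s(x.val, y.val), (hadj k _ _).mpr ⟨x.2, y.2, he⟩⟩
  · intro i j hij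
    ext e
    simp only [Set.mem_inter_iff, Set.mem_empty_iff_false, iff_false, not_and]
    induction e with
    | h x y =>
      rw [SimpleGraph.Subgraph.mem_edgeSet, SimpleGraph.Subgraph.mem_edgeSet, hadj, hadj]
      rintro ⟨hx, hy, hij1⟩ ⟨hx', hy', hij2⟩
      have : s((⟨x, hx⟩ : K.verts), (⟨y, hy⟩ : K.verts)) ∈ (D' i).edgeSet ∩ (D' j).edgeSet :=
        ⟨hij1, hij2⟩
      rw [hedj i j hij] at this
      exact this
  · intro i j hij
    have himg : ∀ k : Fin m, (Subgraph.coeSubgraph (D' k)).verts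
        = Subtype.val '' (D' k).verts := fun k => rfl
    rw [himg, himg, ← Set.image_inter hinj]
    exact (hvss i j hij).image _
  · have himg : ∀ k : Fin m, (Subgraph.coeSubgraph (D' k)).verts
        = Subtype.val '' (D' k).verts := fun k => rfl
    calc (⋃ k, (Subgraph.coeSubgraph (D' k)).verts)
        = Subtype.val '' (⋃ k, (D' k).verts) := by
          simp only [himg, Set.image_iUnion]
      _ = K.verts := by rw [hvu, SimpleGraph.Subgraph.verts_top, Set.image_univ,
          Subtype.range_coe]
  · apply Set.Subset.antisymm
    · exact Set.iUnion_subset fun k =>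
        SimpleGraph.Subgraph.edgeSet_mono (Subgraph.coeSubgraph_le (D' k))
    · intro e he
      induction e with
      | h x y =>
        rw [SimpleGraph.Subgraph.mem_edgeSet] at he
        have hx : x ∈ K.verts := K.edge_vert he
        have hy : y ∈ K.verts := K.edge_vert he.symm
        have : s((⟨x, hx⟩ : K.verts), (⟨y, hy⟩ : K.verts)) ∈ (⊤ : K.coe.Subgraph).edgeSet := by
          rw [SimpleGraph.Subgraph.edgeSet_top, SimpleGraph.mem_edgeSet]
          exact he
        rw [← heu] at this
        obtain ⟨s, ⟨k, rfl⟩, hk⟩ := this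
        refine Set.mem_iUnion.mpr ⟨k, ?_⟩
        rw [SimpleGraph.Subgraph.mem_edgeSet] at hk ⊢
        exact (hadj k _ _).mpr ⟨hx, hy, hk⟩
  · have : decompGraph (fun k => Subgraph.coeSubgraph (D' k)) = decompGraph D' := by
      ext i j
      show (i ≠ j ∧ _) ↔ (i ≠ j ∧ _)
      refine and_congr_right fun _ => ?_
      have himg : ∀ k : Fin m, (Subgraph.coeSubgraph (D' k)).verts
          = Subtype.val '' (D' k).verts := fun k => rfl
      rw [himg, himg, ← Set.image_inter hinj]
      exact ⟨fun ⟨x, ⟨a, ha, _⟩⟩ => ⟨a, ha⟩, fun ⟨a, ha⟩ => ⟨a.val, a, ha, rfl⟩⟩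
    rw [this]
    exact htree
end Transfer
section StarConfig
variable {V : Type*} {G : SimpleGraph V}

structure StarConfig (G : SimpleGraph V) (v : V) (K : G.Subgraph)
    {ι : Type*} (L : ι → G.Subgraph) : Prop where
  hvK : v ∈ K.verts
  hKc : K.Connected
  hKe : K.edgeSet.Nonempty
  hLc : ∀ i, (L i).Connected
  hLe : ∀ i, (L i).edgeSet.Nonempty
  hvL : ∀ i, v ∉ (L i).verts
  hLK : ∀ i, ((L i).verts ∩ K.verts).Nonempty
  hLKs : ∀ i, ((L i).verts ∩ K.verts).Subsingleton
  hLL : ∀ i j, i ≠ j → (L i).verts ∩ (L j).verts = ∅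
  hLKe : ∀ i, (L i).edgeSet ∩ K.edgeSet = ∅
  hLLe : ∀ i j, i ≠ j → (L i).edgeSet ∩ (L j).edgeSet = ∅
  hverts : K.verts ∪ (⋃ i, (L i).verts) = Set.univ
  hedges : K.edgeSet ∪ (⋃ i, (L i).edgeSet) = G.edgeSet

lemma StarConfig.reindex {v : V} {K : G.Subgraph} {ι κ : Type*} {L : ι → G.Subgraph}
    (h : StarConfig G v K L) (e : κ ≃ ι) : StarConfig G v K (L ∘ e) where
  hvK := h.hvK
  hKc := h.hKc
  hKe := h.hKe
  hLc := fun i => h.hLc (e i)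
  hLe := fun i => h.hLe (e i)
  hvL := fun i => h.hvL (e i)
  hLK := fun i => h.hLK (e i)
  hLKs := fun i => h.hLKs (e i)
  hLL := fun i j hij => h.hLL (e i) (e j) (fun hc => hij (e.injective hc))
  hLKe := fun i => h.hLKe (e i)
  hLLe := fun i j hij => h.hLLe (e i) (e j) (fun hc => hij (e.injective hc))
  hverts := by
    show K.verts ∪ (⋃ i, (L (e i)).verts) = Set.univ
    rw [e.surjective.iUnion_comp (g := fun i => (L i).verts)]; exact h.hverts
  hedges := by
    show K.edgeSet ∪ (⋃ i, (L (e i)).edgeSet) = G.edgeSet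
    rw [e.surjective.iUnion_comp (g := fun i => (L i).edgeSet)]; exact h.hedges

lemma StarConfig.toDecomposition {v : V} {K : G.Subgraph} {ι : Type*} [Fintype ι] [Nonempty ι]
    {L : ι → G.Subgraph} (h : StarConfig G v K L) (hatomic : IsAtomicGraph K.coe) :
    ∃ (n : ℕ) (K' : G.Subgraph) (L' : Fin n → G.Subgraph),
      IsDecomposition G (Fin.cons K' L') ∧ IsAtomicGraph K'.coe ∧ v ∈ K'.verts ∧
      ∀ i, v ∉ (L' i).verts ∧ ((L' i).verts ∩ K'.verts).Nonempty := by
  classical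
  set n := Fintype.card ι with hn
  have hn1 : 1 ≤ n := Fintype.card_pos
  set e : Fin n ≃ ι := (Fintype.equivFin ι).symm with he
  have h' := h.reindex e
  set L' : Fin n → G.Subgraph := L ∘ e with hL'
  refine ⟨n, K, L', ⟨by omega, fun i => le_top, ?_, ?_, ?_, ?_, ?_, ?_, ?_⟩,
    hatomic, h.hvK, fun i => ⟨h'.hvL i, h'.hLK i⟩⟩
  · intro i
    rcases Fin.eq_zero_or_eq_succ i with rfl | ⟨i', rfl⟩
    · rw [Fin.cons_zero]; exact h'.hKc
    · rw [Fin.cons_succ]; exact h'.hLc i'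
  · intro i
    rcases Fin.eq_zero_or_eq_succ i with rfl | ⟨i', rfl⟩
    · rw [Fin.cons_zero]; exact h'.hKe
    · rw [Fin.cons_succ]; exact h'.hLe i'
  · intro i j hij
    rcases Fin.eq_zero_or_eq_succ i with rfl | ⟨i', rfl⟩ <;>
      rcases Fin.eq_zero_or_eq_succ j with rfl | ⟨j', rfl⟩
    · exact absurd rfl hij
    · rw [Fin.cons_zero, Fin.cons_succ, Set.inter_comm]; exact h'.hLKe j'
    · rw [Fin.cons_zero, Fin.cons_succ]; exact h'.hLKe i'
    · rw [Fin.cons_succ, Fin.cons_succ]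
      exact h'.hLLe i' j' (fun hc => hij (by rw [hc]))
  · intro i j hij
    rcases Fin.eq_zero_or_eq_succ i with rfl | ⟨i', rfl⟩ <;>
      rcases Fin.eq_zero_or_eq_succ j with rfl | ⟨j', rfl⟩
    · exact absurd rfl hij
    · rw [Fin.cons_zero, Fin.cons_succ, Set.inter_comm]; exact h'.hLKs j'
    · rw [Fin.cons_zero, Fin.cons_succ]; exact h'.hLKs i'
    · rw [Fin.cons_succ, Fin.cons_succ, h'.hLL i' j' (fun hc => hij (by rw [hc]))]
      exact Set.subsingleton_empty
  · rw [SimpleGraph.Subgraph.verts_top, ← h'.hverts]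
    ext u
    simp only [Set.mem_iUnion, Fin.exists_fin_succ, Fin.cons_zero, Fin.cons_succ,
      Set.mem_union]
  · rw [SimpleGraph.Subgraph.edgeSet_top, ← h'.hedges]
    ext u
    simp only [Set.mem_iUnion, Fin.exists_fin_succ, Fin.cons_zero, Fin.cons_succ,
      Set.mem_union]
  · have heq : decompGraph (Fin.cons K L' : Fin (n+1) → G.Subgraph) = _root_.starGraph n := by
      ext i j
      show (i ≠ j ∧ _) ↔ (i ≠ j ∧ (i = 0 ∨ j = 0))
      refine and_congr_right fun hij => ?_
      constructor
      · intro hne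
        by_contra hcon
        push_neg at hcon
        obtain ⟨i', rfl⟩ := Fin.eq_succ_of_ne_zero hcon.1
        obtain ⟨j', rfl⟩ := Fin.eq_succ_of_ne_zero hcon.2
        rw [Fin.cons_succ, Fin.cons_succ] at hne
        rw [h'.hLL i' j' (fun hc => hij (by rw [hc]))] at hne
        exact Set.not_nonempty_empty hne
      · rintro (rfl | rfl)
        · obtain ⟨j', rfl⟩ := Fin.eq_succ_of_ne_zero (Ne.symm hij)
          rw [Fin.cons_zero, Fin.cons_succ, Set.inter_comm]
          exact h'.hLK j'
        · obtain ⟨i', rfl⟩ := Fin.eq_succ_of_ne_zero hij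
          rw [Fin.cons_zero, Fin.cons_succ]
          exact h'.hLK i'
    rw [heq]
    exact starGraph_isTree n
end StarConfig
section Step1
variable {V : Type*} {G : SimpleGraph V}

lemma step_case1 {v : V} {K : G.Subgraph} {ι₀ : Type*} {L : ι₀ → G.Subgraph}
    (hstar : StarConfig G v K L) {m : ℕ} {E : Fin m → G.Subgraph}
    (hdec : IsDecompositionOf K E) {a b : Fin m} (hva : v ∈ (E a).verts)
    (hvb : v ∈ (E b).verts) (hne : a ≠ b) :
    ∃ P : Fin 2 → G.Subgraph, IsDecomposition G P ∧ ∀ i, v ∈ (P i).verts := by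
  classical
  obtain ⟨h2, hle, hconn, hedge, hedj, hvss, hvu, heu, htree⟩ := hdec
  set T := decompGraph E with hTdef
  have hab : T.Adj a b := ⟨hne, ⟨v, hva, hvb⟩⟩
  set Sa : Set (Fin m) := {x | Avoids T b x a} with hSa
  set Sb : Set (Fin m) := {x | Avoids T a x b} with hSb
  set Ma : G.Subgraph := ⨆ x : Sa, E x.val with hMa
  set Mb : G.Subgraph := ⨆ x : Sb, E x.val with hMb
  have haSa : a ∈ Sa := avoids_refl hab.ne
  have hbSb : b ∈ Sb := avoids_refl hab.ne'
  have hEMa : ∀ x, x ∈ Sa → E x ≤ Ma := fun x hx => le_iSup (fun y : Sa => E y.val) ⟨x, hx⟩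
  have hEMb : ∀ x, x ∈ Sb → E x ≤ Mb := fun x hx => le_iSup (fun y : Sb => E y.val) ⟨x, hx⟩
  have hMaK : Ma ≤ K := iSup_le fun x => hle x.val
  have hMbK : Mb ≤ K := iSup_le fun x => hle x.val
  have hMav : ∀ u, u ∈ Ma.verts ↔ ∃ x ∈ Sa, u ∈ (E x).verts := by
    intro u
    rw [hMa, SimpleGraph.Subgraph.verts_iSup]
    simp only [Set.mem_iUnion, Subtype.exists, exists_prop]
  have hMbv : ∀ u, u ∈ Mb.verts ↔ ∃ x ∈ Sb, u ∈ (E x).verts := by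
    intro u
    rw [hMb, SimpleGraph.Subgraph.verts_iSup]
    simp only [Set.mem_iUnion, Subtype.exists, exists_prop]
  have hMae : ∀ e, e ∈ Ma.edgeSet ↔ ∃ x ∈ Sa, e ∈ (E x).edgeSet := by
    intro e
    rw [hMa, SimpleGraph.Subgraph.edgeSet_iSup]
    simp only [Set.mem_iUnion, Subtype.exists, exists_prop]
  have hMbe : ∀ e, e ∈ Mb.edgeSet ↔ ∃ x ∈ Sb, e ∈ (E x).edgeSet := by
    intro e
    rw [hMb, SimpleGraph.Subgraph.edgeSet_iSup]
    simp only [Set.mem_iUnion, Subtype.exists, exists_prop]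
  have htot : ∀ x, x ∈ Sa ∨ x ∈ Sb := avoid_total2 htree.isConnected hab
  have hdisjS : ∀ x, x ∈ Sa → x ∈ Sb → False := by
    intro x h1 h2
    obtain ⟨e1, e2⟩ := avoid_side_cross htree hab h1 h2 (Or.inl rfl)
    exact hne (e1 ▸ e2 ▸ rfl)
  have hcrossE : ∀ x ∈ Sa, ∀ y ∈ Sb, ((E x).verts ∩ (E y).verts).Nonempty →
      x = a ∧ y = b := by
    intro x hx y hy hxy
    by_cases hxyeq : x = y
    · exact absurd hy (hxyeq ▸ fun h => hdisjS x hx h)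
    · exact avoid_side_cross htree hab hx hy (Or.inr ⟨hxyeq, hxy⟩)
  have hEab_sub : (E a).verts ∩ (E b).verts ⊆ {v} := fun u hu => hvss a b hne hu ⟨hva, hvb⟩
  -- attachments
  set w : ι₀ → V := fun i => (hstar.hLK i).choose with hwdef
  have hw : ∀ i, w i ∈ (L i).verts ∩ K.verts := fun i => (hstar.hLK i).choose_spec
  have hwu : ∀ i u, u ∈ (L i).verts → u ∈ K.verts → u = w i :=
    fun i u h1 h2 => hstar.hLKs i ⟨h1, h2⟩ (hw i)
  set A : Set ι₀ := {i | w i ∈ Ma.verts} with hA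
  set P0 : G.Subgraph := Ma ⊔ ⨆ i : A, L i.val with hP0
  set P1 : G.Subgraph := Mb ⊔ ⨆ i : (Aᶜ : Set ι₀), L i.val with hP1
  have hP0v : ∀ u, u ∈ P0.verts ↔ u ∈ Ma.verts ∨ ∃ i ∈ A, u ∈ (L i).verts := by
    intro u
    rw [hP0, SimpleGraph.Subgraph.verts_sup, Set.mem_union, SimpleGraph.Subgraph.verts_iSup,
      SimpleGraph.Subgraph.verts_iSup]
    simp only [Set.mem_iUnion, Subtype.exists, exists_prop]
  have hP1v : ∀ u, u ∈ P1.verts ↔ u ∈ Mb.verts ∨ ∃ i ∈ Aᶜ, u ∈ (L i).verts := by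
    intro u
    rw [hP1, SimpleGraph.Subgraph.verts_sup, Set.mem_union, SimpleGraph.Subgraph.verts_iSup,
      SimpleGraph.Subgraph.verts_iSup]
    simp only [Set.mem_iUnion, Subtype.exists, exists_prop]
  have hP0e : ∀ e, e ∈ P0.edgeSet ↔ e ∈ Ma.edgeSet ∨ ∃ i ∈ A, e ∈ (L i).edgeSet := by
    intro e
    rw [hP0, SimpleGraph.Subgraph.edgeSet_sup, Set.mem_union, SimpleGraph.Subgraph.edgeSet_iSup,
      SimpleGraph.Subgraph.edgeSet_iSup]
    simp only [Set.mem_iUnion, Subtype.exists, exists_prop]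
  have hP1e : ∀ e, e ∈ P1.edgeSet ↔ e ∈ Mb.edgeSet ∨ ∃ i ∈ Aᶜ, e ∈ (L i).edgeSet := by
    intro e
    rw [hP1, SimpleGraph.Subgraph.edgeSet_sup, Set.mem_union, SimpleGraph.Subgraph.edgeSet_iSup,
      SimpleGraph.Subgraph.edgeSet_iSup]
    simp only [Set.mem_iUnion, Subtype.exists, exists_prop]
  have hvP0 : v ∈ P0.verts := (hP0v v).mpr (Or.inl ((hMav v).mpr ⟨a, haSa, hva⟩))
  have hvP1 : v ∈ P1.verts := (hP1v v).mpr (Or.inl ((hMbv v).mpr ⟨b, hbSb, hvb⟩))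
  -- the key: intersection of verts is ⊆ {v}
  have hkey : P0.verts ∩ P1.verts ⊆ {v} := by
    rintro u ⟨hu0, hu1⟩
    rcases (hP0v u).mp hu0 with hMau | ⟨i, hiA, hiL⟩
    · obtain ⟨x, hxSa, hxu⟩ := (hMav u).mp hMau
      rcases (hP1v u).mp hu1 with hMbu | ⟨j, hjA, hjL⟩
      · obtain ⟨y, hySb, hyu⟩ := (hMbv u).mp hMbu
        obtain ⟨rfl, rfl⟩ := hcrossE x hxSa y hySb ⟨u, hxu, hyu⟩
        exact hEab_sub ⟨hxu, hyu⟩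
      · -- u ∈ E x (side a) and u ∈ L j with j ∉ A
        have huK : u ∈ K.verts := (hle x).1 hxu
        have := hwu j u hjL huK
        subst this
        exact absurd ((hMav (w j)).mpr ⟨x, hxSa, hxu⟩) hjA
    · -- u ∈ L i, i ∈ A
      rcases (hP1v u).mp hu1 with hMbu | ⟨j, hjA, hjL⟩
      · obtain ⟨y, hySb, hyu⟩ := (hMbv u).mp hMbu
        have huK : u ∈ K.verts := (hle y).1 hyu
        have hui := hwu i u hiL huK
        obtain ⟨x, hxSa, hxw⟩ := (hMav (w i)).mp hiA
        obtain ⟨rfl, rfl⟩ := hcrossE x hxSa y hySb ⟨w i, hxw, hui ▸ hyu⟩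
        have : w i = v := hEab_sub ⟨hxw, hui ▸ hyu⟩
        exact absurd (this ▸ (hw i).1) (hstar.hvL i)
      · by_cases hij : i = j
        · exact absurd (hij ▸ hiA) hjA
        · have : u ∈ (L i).verts ∩ (L j).verts := ⟨hiL, hjL⟩
          rw [hstar.hLL i j hij] at this
          exact absurd this (Set.notMem_empty u)
  refine ⟨![P0, P1], ⟨le_refl 2, fun i => le_top, ?_, ?_, ?_, ?_, ?_, ?_, ?_⟩, ?_⟩
  · -- connected
    intro i
    fin_cases i
    · show P0.Connected
      rw [hP0]
      exact connected_attach (connected_iSup_avoids E hconn b a hab.ne)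
        (fun i : A => L i.val) (fun i => hstar.hLc i.val)
        (fun i => ⟨w i.val, (hw i.val).1, i.2⟩)
    · show P1.Connected
      rw [hP1]
      exact connected_attach (connected_iSup_avoids E hconn a b hab.ne')
        (fun i : (Aᶜ : Set ι₀) => L i.val) (fun i => hstar.hLc i.val)
        (fun i => ⟨w i.val, (hw i.val).1, by
          have := (hw i.val).2
          rw [← hvu] at this
          obtain ⟨s, ⟨x, rfl⟩, hx⟩ := this
          rcases htot x with hxSa | hxSb
          · exact absurd ((hMav _).mpr ⟨x, hxSa, hx⟩) i.2
          · exact (hMbv _).mpr ⟨x, hxSb, hx⟩⟩)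
  · -- edges nonempty
    intro i
    fin_cases i
    · obtain ⟨e, he⟩ := hedge a
      exact ⟨e, (hP0e e).mpr (Or.inl ((hMae e).mpr ⟨a, haSa, he⟩))⟩
    · obtain ⟨e, he⟩ := hedge b
      exact ⟨e, (hP1e e).mpr (Or.inl ((hMbe e).mpr ⟨b, hbSb, he⟩))⟩
  · -- edge disjointness
    have hdisj01 : P0.edgeSet ∩ P1.edgeSet = ∅ := by
      ext e
      simp only [Set.mem_inter_iff, Set.mem_empty_iff_false, iff_false, not_and]
      intro he0 he1
      rcases (hP0e e).mp he0 with hMae' | ⟨i, hiA, hiL⟩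
      · obtain ⟨x, hxSa, hxe⟩ := (hMae e).mp hMae'
        rcases (hP1e e).mp he1 with hMbe' | ⟨j, hjA, hjL⟩
        · obtain ⟨y, hySb, hye⟩ := (hMbe e).mp hMbe'
          have hxy : x ≠ y := fun h => hdisjS x hxSa (h ▸ hySb)
          have : e ∈ (E x).edgeSet ∩ (E y).edgeSet := ⟨hxe, hye⟩
          rw [hedj x y hxy] at this
          exact this
        · have : e ∈ (L j).edgeSet ∩ K.edgeSet :=
            ⟨hjL, SimpleGraph.Subgraph.edgeSet_mono (hle x) hxe⟩
          rw [hstar.hLKe j] at this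
          exact this
      · rcases (hP1e e).mp he1 with hMbe' | ⟨j, hjA, hjL⟩
        · obtain ⟨y, hySb, hye⟩ := (hMbe e).mp hMbe'
          have : e ∈ (L i).edgeSet ∩ K.edgeSet :=
            ⟨hiL, SimpleGraph.Subgraph.edgeSet_mono (hle y) hye⟩
          rw [hstar.hLKe i] at this
          exact this
        · have hij : i ≠ j := fun h => hjA (h ▸ hiA)
          have : e ∈ (L i).edgeSet ∩ (L j).edgeSet := ⟨hiL, hjL⟩
          rw [hstar.hLLe i j hij] at this
          exact this
    intro i j hij
    fin_cases i <;> fin_cases j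
    · exact absurd rfl hij
    · exact hdisj01
    · rw [Set.inter_comm]; exact hdisj01
    · exact absurd rfl hij
  · -- verts subsingleton
    have hsub : (P0.verts ∩ P1.verts).Subsingleton :=
      Set.Subsingleton.anti Set.subsingleton_singleton hkey
    intro i j hij
    fin_cases i <;> fin_cases j
    · exact absurd rfl hij
    · exact hsub
    · rw [Set.inter_comm]; exact hsub
    · exact absurd rfl hij
  · -- verts union
    rw [SimpleGraph.Subgraph.verts_top]
    ext u
    simp only [Set.mem_iUnion, Set.mem_univ, iff_true, Fin.exists_fin_two]
    have hu : u ∈ K.verts ∪ ⋃ i, (L i).verts := by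
      rw [hstar.hverts]; exact Set.mem_univ u
    rcases hu with huK | huL
    · rw [← hvu] at huK
      obtain ⟨s, ⟨x, rfl⟩, hx⟩ := huK
      rcases htot x with hxSa | hxSb
      · exact Or.inl ((hP0v u).mpr (Or.inl ((hMav u).mpr ⟨x, hxSa, hx⟩)))
      · exact Or.inr ((hP1v u).mpr (Or.inl ((hMbv u).mpr ⟨x, hxSb, hx⟩)))
    · obtain ⟨s, ⟨i, rfl⟩, hi⟩ := huL
      by_cases hiA : i ∈ A
      · exact Or.inl ((hP0v u).mpr (Or.inr ⟨i, hiA, hi⟩))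
      · exact Or.inr ((hP1v u).mpr (Or.inr ⟨i, hiA, hi⟩))
  · -- edges union
    rw [SimpleGraph.Subgraph.edgeSet_top]
    ext e
    simp only [Set.mem_iUnion, Fin.exists_fin_two]
    constructor
    · rintro (he | he)
      · rcases (hP0e e).mp he with hMae' | ⟨i, hiA, hiL⟩
        · obtain ⟨x, -, hxe⟩ := (hMae e).mp hMae'
          have : e ∈ K.edgeSet := SimpleGraph.Subgraph.edgeSet_mono (hle x) hxe
          rw [← hstar.hedges]
          exact Or.inl this
        · rw [← hstar.hedges]
          exact Or.inr (Set.mem_iUnion.mpr ⟨i, hiL⟩)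
      · rcases (hP1e e).mp he with hMbe' | ⟨i, hiA, hiL⟩
        · obtain ⟨x, -, hxe⟩ := (hMbe e).mp hMbe'
          have : e ∈ K.edgeSet := SimpleGraph.Subgraph.edgeSet_mono (hle x) hxe
          rw [← hstar.hedges]
          exact Or.inl this
        · rw [← hstar.hedges]
          exact Or.inr (Set.mem_iUnion.mpr ⟨i, hiL⟩)
    · intro he
      rw [← hstar.hedges] at he
      rcases he with heK | heL
      · rw [← heu] at heK
        obtain ⟨s, ⟨x, rfl⟩, hx⟩ := heK
        rcases htot x with hxSa | hxSb
        · exact Or.inl ((hP0e e).mpr (Or.inl ((hMae e).mpr ⟨x, hxSa, hx⟩)))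
        · exact Or.inr ((hP1e e).mpr (Or.inl ((hMbe e).mpr ⟨x, hxSb, hx⟩)))
      · obtain ⟨s, ⟨i, rfl⟩, hi⟩ := heL
        by_cases hiA : i ∈ A
        · exact Or.inl ((hP0e e).mpr (Or.inr ⟨i, hiA, hi⟩))
        · exact Or.inr ((hP1e e).mpr (Or.inr ⟨i, hiA, hi⟩))
  · -- tree
    have heq : decompGraph ![P0, P1] = _root_.starGraph 1 := by
      ext i j
      show (i ≠ j ∧ _) ↔ (i ≠ j ∧ (i = 0 ∨ j = 0))
      refine and_congr_right fun hij => ?_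
      constructor
      · intro _
        have h01 : ∀ i j : Fin 2, i ≠ j → i = 0 ∨ j = 0 := by decide
        exact h01 i j hij
      · intro _
        have hv2 : ∀ k : Fin 2, v ∈ (![P0, P1] k).verts := by
          intro k
          fin_cases k
          · exact hvP0
          · exact hvP1
        exact ⟨v, hv2 i, hv2 j⟩
    rw [heq]
    exact starGraph_isTree 1
  · -- both contain v
    intro i
    fin_cases i
    · exact hvP0
    · exact hvP1
end Step1
section Step2
variable {V : Type*} {G : SimpleGraph V}

lemma step_case2 {v : V} {K : G.Subgraph} {ι₀ : Type} [Fintype ι₀] {L : ι₀ → G.Subgraph}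
    (hstar : StarConfig G v K L) {m : ℕ} {E : Fin m → G.Subgraph}
    (hdec : IsDecompositionOf K E) {a : Fin m} (hva : v ∈ (E a).verts)
    (huniq : ∀ k, v ∈ (E k).verts → k = a) :
    ∃ (ι : Type) (_ : Fintype ι) (_ : Nonempty ι) (L' : ι → G.Subgraph),
      StarConfig G v (E a) L' ∧ (E a).edgeSet ⊂ K.edgeSet := by
  classical
  obtain ⟨h2, hle, hconn, hedge, hedj, hvss, hvu, heu, htree⟩ := hdec
  set T := decompGraph E with hTdef
  set Nb := {b : Fin m // T.Adj a b} with hNb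
  set S : Nb → Set (Fin m) := fun b => {x | Avoids T a x b.val} with hS
  set M : Nb → G.Subgraph := fun b => ⨆ x : S b, E x.val with hM
  have hbS : ∀ b : Nb, b.val ∈ S b := fun b => avoids_refl b.2.ne'
  have haS : ∀ (b : Nb) (x : Fin m), x ∈ S b → x ≠ a := fun b x hx => avoids_ne hx
  have hEM : ∀ (b : Nb) (x : Fin m), x ∈ S b → E x ≤ M b :=
    fun b x hx => le_iSup (fun y : S b => E y.val) ⟨x, hx⟩
  have hMK : ∀ b : Nb, M b ≤ K := fun b => iSup_le fun x => hle x.val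
  have hMv : ∀ (b : Nb) (u : V), u ∈ (M b).verts ↔ ∃ x ∈ S b, u ∈ (E x).verts := by
    intro b u
    rw [hM]
    rw [SimpleGraph.Subgraph.verts_iSup]
    simp only [Set.mem_iUnion, Subtype.exists, exists_prop]
  have hMe : ∀ (b : Nb) (e : Sym2 V), e ∈ (M b).edgeSet ↔ ∃ x ∈ S b, e ∈ (E x).edgeSet := by
    intro b e
    rw [hM]
    rw [SimpleGraph.Subgraph.edgeSet_iSup]
    simp only [Set.mem_iUnion, Subtype.exists, exists_prop]
  have htot : ∀ x : Fin m, x = a ∨ ∃ b : Nb, x ∈ S b := by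
    intro x
    rcases avoid_total htree.isConnected a x with h | ⟨b, hb, hav⟩
    · exact Or.inl h
    · exact Or.inr ⟨⟨b, hb⟩, hav⟩
  have hSdisj : ∀ (b c : Nb), b ≠ c → ∀ x ∈ S b, ∀ y ∈ S c, (x = y ∨ T.Adj x y) → False := by
    intro b c hbc x hx y hy hxy
    have hvne : b.val ≠ c.val := fun h => hbc (Subtype.ext h)
    exact avoid_branch_disjoint htree b.2 c.2 hvne hx hy hxy
  have hMdisj : ∀ (b c : Nb), b ≠ c → ∀ u, u ∈ (M b).verts → u ∈ (M c).verts → False := by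
    intro b c hbc u hub huc
    obtain ⟨x, hx, hxu⟩ := (hMv b u).mp hub
    obtain ⟨y, hy, hyu⟩ := (hMv c u).mp huc
    by_cases hxyeq : x = y
    · exact hSdisj b c hbc x hx y hy (Or.inl hxyeq)
    · exact hSdisj b c hbc x hx y hy (Or.inr ⟨hxyeq, ⟨u, hxu, hyu⟩⟩)
  -- the intersection with E a is contained in E b ∩ E a
  have hMEa : ∀ (b : Nb) (u : V), u ∈ (M b).verts → u ∈ (E a).verts →
      u ∈ (E b.val).verts ∩ (E a).verts := by
    intro b u hub hua
    obtain ⟨x, hx, hxu⟩ := (hMv b u).mp hub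
    have hxa : x ≠ a := haS b x hx
    have hxb : x = b.val := by
      by_contra hxb
      have hadjax : T.Adj a x := ⟨fun h => hxa h.symm, ⟨u, hua, hxu⟩⟩
      exact hSdisj ⟨x, hadjax⟩ b (fun h => hxb (congrArg Subtype.val h))
        x (avoids_refl hxa) x hx (Or.inl rfl)
    exact ⟨hxb ▸ hxu, hua⟩
  -- attachments
  set w : ι₀ → V := fun i => (hstar.hLK i).choose with hwdef
  have hw : ∀ i, w i ∈ (L i).verts ∩ K.verts := fun i => (hstar.hLK i).choose_spec
  have hwu : ∀ i u, u ∈ (L i).verts → u ∈ K.verts → u = w i :=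
    fun i u h1 h2 => hstar.hLKs i ⟨h1, h2⟩ (hw i)
  set A : Nb → Set ι₀ := fun b => {i | w i ∈ (M b).verts} with hA
  set ι'' := {i : ι₀ // ∀ b : Nb, w i ∉ (M b).verts} with hι''
  set ι := Nb ⊕ ι'' with hι
  set L' : ι → G.Subgraph :=
    Sum.elim (fun b => M b ⊔ ⨆ i : A b, L i.val) (fun i => L i.val) with hL'
  have hL'v : ∀ (b : Nb) (u : V), u ∈ (L' (Sum.inl b)).verts ↔
      u ∈ (M b).verts ∨ ∃ i ∈ A b, u ∈ (L i).verts := by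
    intro b u
    show u ∈ (M b ⊔ _).verts ↔ _
    rw [SimpleGraph.Subgraph.verts_sup, Set.mem_union, SimpleGraph.Subgraph.verts_iSup,
      SimpleGraph.Subgraph.verts_iSup]
    simp only [Set.mem_iUnion, Subtype.exists, exists_prop]
  have hL'e : ∀ (b : Nb) (e : Sym2 V), e ∈ (L' (Sum.inl b)).edgeSet ↔
      e ∈ (M b).edgeSet ∨ ∃ i ∈ A b, e ∈ (L i).edgeSet := by
    intro b e
    show e ∈ (M b ⊔ _).edgeSet ↔ _
    rw [SimpleGraph.Subgraph.edgeSet_sup, Set.mem_union, SimpleGraph.Subgraph.edgeSet_iSup,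
      SimpleGraph.Subgraph.edgeSet_iSup]
    simp only [Set.mem_iUnion, Subtype.exists, exists_prop]
  -- w i ∈ E a for leftover indices
  have hwEa : ∀ i : ι'', w i.val ∈ (E a).verts := by
    intro i
    have := (hw i.val).2
    rw [← hvu] at this
    obtain ⟨s, ⟨x, rfl⟩, hx⟩ := this
    rcases htot x with rfl | ⟨b, hb⟩
    · exact hx
    · exact absurd ((hMv b _).mpr ⟨x, hb, hx⟩) (i.2 b)
  -- v not in branches
  have hvM : ∀ b : Nb, v ∉ (M b).verts := by
    intro b hv
    obtain ⟨x, hx, hxv⟩ := (hMv b v).mp hv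
    exact haS b x hx (huniq x hxv)
  -- disjointness of (L' inl b) and (L' inl c)
  have hll1 : ∀ (b c : Nb), b ≠ c →
      (L' (Sum.inl b)).verts ∩ (L' (Sum.inl c)).verts = ∅ := by
    intro b c hbc
    ext u
    simp only [Set.mem_inter_iff, Set.mem_empty_iff_false, iff_false, not_and]
    intro hub huc
    rcases (hL'v b u).mp hub with hMb | ⟨i, hiA, hiL⟩
    · rcases (hL'v c u).mp huc with hMc | ⟨j, hjA, hjL⟩
      · exact hMdisj b c hbc u hMb hMc
      · have : u = w j := hwu j u hjL ((hMK b).1 hMb)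
        exact hMdisj b c hbc (w j) (this ▸ hMb) hjA
    · rcases (hL'v c u).mp huc with hMc | ⟨j, hjA, hjL⟩
      · have : u = w i := hwu i u hiL ((hMK c).1 hMc)
        exact hMdisj b c hbc (w i) hiA (this ▸ hMc)
      · by_cases hij : i = j
        · exact hMdisj b c hbc (w i) hiA (hij ▸ hjA)
        · have : u ∈ (L i).verts ∩ (L j).verts := ⟨hiL, hjL⟩
          rw [hstar.hLL i j hij] at this
          exact this
  have hll2 : ∀ (b : Nb) (j : ι''),
      (L' (Sum.inl b)).verts ∩ (L' (Sum.inr j)).verts = ∅ := by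
    intro b j
    ext u
    simp only [Set.mem_inter_iff, Set.mem_empty_iff_false, iff_false, not_and]
    intro hub huj
    have hujL : u ∈ (L j.val).verts := huj
    rcases (hL'v b u).mp hub with hMb | ⟨i, hiA, hiL⟩
    · have : u = w j.val := hwu j.val u hujL ((hMK b).1 hMb)
      exact j.2 b (this ▸ hMb)
    · by_cases hij : i = j.val
      · exact j.2 b (hij ▸ hiA)
      · have : u ∈ (L i).verts ∩ (L j.val).verts := ⟨hiL, hujL⟩
        rw [hstar.hLL i j.val hij] at this
        exact this
  -- A-membership forces i ∉ ι'' etc (used in edge disjointness)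
  have hAne : ∀ (b c : Nb), b ≠ c → ∀ i ∈ A b, ∀ j ∈ A c, i ≠ j := by
    intro b c hbc i hi j hj hij
    exact hMdisj b c hbc (w i) hi (hij ▸ hj)
  have hAne' : ∀ (b : Nb), ∀ i ∈ A b, ∀ j : ι'', i ≠ j.val := by
    intro b i hi j hij
    exact j.2 b (hij ▸ hi)
  refine ⟨ι, inferInstance, ?_, L', ?_, ?_⟩
  · -- nonempty: a has a neighbor
    have hm2 : Nontrivial (Fin m) := Fin.nontrivial_iff_two_le.mpr h2
    obtain ⟨b', hb'⟩ := exists_ne (α := Fin m) a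
    rcases htot b' with h | ⟨b, hbm⟩
    · exact absurd h hb'
    · exact ⟨Sum.inl b⟩
  · constructor
    · exact hva
    · exact hconn a
    · exact hedge a
    · -- connected
      rintro (b | i)
      · exact connected_attach (connected_iSup_avoids E hconn a b.val b.2.ne')
          (fun i : A b => L i.val) (fun i => hstar.hLc i.val)
          (fun i => ⟨w i.val, (hw i.val).1, i.2⟩)
      · exact hstar.hLc i.val
    · -- edges nonempty
      rintro (b | i)
      · obtain ⟨e, he⟩ := hedge b.val
        exact ⟨e, (hL'e b e).mpr (Or.inl ((hMe b e).mpr ⟨b.val, hbS b, he⟩))⟩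
      · exact hstar.hLe i.val
    · -- v not in L'
      rintro (b | i)
      · intro hv
        rcases (hL'v b v).mp hv with hMb | ⟨i, hiA, hiL⟩
        · exact hvM b hMb
        · exact hstar.hvL i hiL
      · exact hstar.hvL i.val
    · -- nonempty intersection with E a
      rintro (b | i)
      · obtain ⟨u, hua, hub⟩ := b.2.2
        exact ⟨u, (hL'v b u).mpr (Or.inl ((hMv b u).mpr ⟨b.val, hbS b, hub⟩)), hua⟩
      · exact ⟨w i.val, (hw i.val).1, hwEa i⟩
    · -- subsingleton intersection with E a
      rintro (b | i)
      · have hsub : (L' (Sum.inl b)).verts ∩ (E a).verts ⊆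
            (E b.val).verts ∩ (E a).verts := by
          rintro u ⟨hub, hua⟩
          rcases (hL'v b u).mp hub with hMb | ⟨i, hiA, hiL⟩
          · exact hMEa b u hMb hua
          · have : u = w i := hwu i u hiL ((hle a).1 hua)
            subst this
            exact hMEa b (w i) hiA hua
        exact ((hvss b.val a b.2.ne') ).anti hsub
      · have hsub : (L' (Sum.inr i)).verts ∩ (E a).verts ⊆
            (L i.val).verts ∩ K.verts := fun u ⟨h1, h2⟩ => ⟨h1, (hle a).1 h2⟩
        exact (hstar.hLKs i.val).anti hsub
    · -- pairwise disjoint verts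
      rintro (b | i) (c | j) hne
      · exact hll1 b c (fun h => hne (h ▸ rfl))
      · exact hll2 b j
      · rw [Set.inter_comm]; exact hll2 c i
      · exact hstar.hLL i.val j.val (fun h => hne (by rw [Subtype.ext h]))
    · -- edge disjointness with E a
      rintro (b | i)
      · ext e
        simp only [Set.mem_inter_iff, Set.mem_empty_iff_false, iff_false, not_and]
        intro heb hea
        rcases (hL'e b e).mp heb with hMb | ⟨i, hiA, hiL⟩
        · obtain ⟨x, hx, hxe⟩ := (hMe b e).mp hMb
          have : e ∈ (E x).edgeSet ∩ (E a).edgeSet := ⟨hxe, hea⟩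
          rw [hedj x a (haS b x hx)] at this
          exact this
        · have : e ∈ (L i).edgeSet ∩ K.edgeSet :=
            ⟨hiL, SimpleGraph.Subgraph.edgeSet_mono (hle a) hea⟩
          rw [hstar.hLKe i] at this
          exact this
      · ext e
        simp only [Set.mem_inter_iff, Set.mem_empty_iff_false, iff_false, not_and]
        intro hei hea
        have : e ∈ (L i.val).edgeSet ∩ K.edgeSet :=
          ⟨hei, SimpleGraph.Subgraph.edgeSet_mono (hle a) hea⟩
        rw [hstar.hLKe i.val] at this
        exact this
    · -- pairwise edge disjointness
      have hedisj1 : ∀ (b c : Nb), b ≠ c →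
          (L' (Sum.inl b)).edgeSet ∩ (L' (Sum.inl c)).edgeSet = ∅ := by
        intro b c hbc
        ext e
        simp only [Set.mem_inter_iff, Set.mem_empty_iff_false, iff_false, not_and]
        intro heb hec
        rcases (hL'e b e).mp heb with hMb | ⟨i, hiA, hiL⟩
        · obtain ⟨x, hx, hxe⟩ := (hMe b e).mp hMb
          rcases (hL'e c e).mp hec with hMc | ⟨j, hjA, hjL⟩
          · obtain ⟨y, hy, hye⟩ := (hMe c e).mp hMc
            have hxy : x ≠ y := fun h => hSdisj b c hbc x hx y hy (Or.inl h)
            have : e ∈ (E x).edgeSet ∩ (E y).edgeSet := ⟨hxe, hye⟩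
            rw [hedj x y hxy] at this
            exact this
          · have : e ∈ (L j).edgeSet ∩ K.edgeSet :=
              ⟨hjL, SimpleGraph.Subgraph.edgeSet_mono (hle x) hxe⟩
            rw [hstar.hLKe j] at this
            exact this
        · rcases (hL'e c e).mp hec with hMc | ⟨j, hjA, hjL⟩
          · obtain ⟨y, hy, hye⟩ := (hMe c e).mp hMc
            have : e ∈ (L i).edgeSet ∩ K.edgeSet :=
              ⟨hiL, SimpleGraph.Subgraph.edgeSet_mono (hle y) hye⟩
            rw [hstar.hLKe i] at this
            exact this
          · have : e ∈ (L i).edgeSet ∩ (L j).edgeSet := ⟨hiL, hjL⟩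
            rw [hstar.hLLe i j (hAne b c hbc i hiA j hjA)] at this
            exact this
      have hedisj2 : ∀ (b : Nb) (j : ι''),
          (L' (Sum.inl b)).edgeSet ∩ (L' (Sum.inr j)).edgeSet = ∅ := by
        intro b j
        ext e
        simp only [Set.mem_inter_iff, Set.mem_empty_iff_false, iff_false, not_and]
        intro heb hej
        have hejL : e ∈ (L j.val).edgeSet := hej
        rcases (hL'e b e).mp heb with hMb | ⟨i, hiA, hiL⟩
        · obtain ⟨x, hx, hxe⟩ := (hMe b e).mp hMb
          have : e ∈ (L j.val).edgeSet ∩ K.edgeSet :=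
            ⟨hejL, SimpleGraph.Subgraph.edgeSet_mono (hle x) hxe⟩
          rw [hstar.hLKe j.val] at this
          exact this
        · have : e ∈ (L i).edgeSet ∩ (L j.val).edgeSet := ⟨hiL, hejL⟩
          rw [hstar.hLLe i j.val (hAne' b i hiA j)] at this
          exact this
      rintro (b | i) (c | j) hne
      · exact hedisj1 b c (fun h => hne (h ▸ rfl))
      · exact hedisj2 b j
      · rw [Set.inter_comm]; exact hedisj2 c i
      · exact hstar.hLLe i.val j.val (fun h => hne (by rw [Subtype.ext h]))
    · -- verts union
      apply Set.eq_univ_of_univ_subset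
      intro u _
      have hu : u ∈ K.verts ∪ ⋃ i, (L i).verts := by
        rw [hstar.hverts]; exact Set.mem_univ u
      rcases hu with huK | huL
      · rw [← hvu] at huK
        obtain ⟨s, ⟨x, rfl⟩, hx⟩ := huK
        rcases htot x with rfl | ⟨b, hb⟩
        · exact Or.inl hx
        · exact Or.inr (Set.mem_iUnion.mpr ⟨Sum.inl b,
            (hL'v b u).mpr (Or.inl ((hMv b u).mpr ⟨x, hb, hx⟩))⟩)
      · obtain ⟨s, ⟨i, rfl⟩, hi⟩ := huL
        by_cases hib : ∃ b : Nb, w i ∈ (M b).verts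
        · obtain ⟨b, hb⟩ := hib
          exact Or.inr (Set.mem_iUnion.mpr ⟨Sum.inl b, (hL'v b u).mpr (Or.inr ⟨i, hb, hi⟩)⟩)
        · push_neg at hib
          exact Or.inr (Set.mem_iUnion.mpr ⟨Sum.inr ⟨i, hib⟩, hi⟩)
    · -- edges union
      apply Set.Subset.antisymm
      · intro e he
        rcases he with hea | heL
        · rw [← hstar.hedges]
          exact Or.inl (SimpleGraph.Subgraph.edgeSet_mono (hle a) hea)
        · obtain ⟨s, ⟨x, rfl⟩, hx⟩ := heL
          rcases x with b | i
          · rcases (hL'e b _).mp hx with hMb | ⟨i, hiA, hiL⟩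
            · obtain ⟨y, hy, hye⟩ := (hMe b _).mp hMb
              rw [← hstar.hedges]
              exact Or.inl (SimpleGraph.Subgraph.edgeSet_mono (hle y) hye)
            · rw [← hstar.hedges]
              exact Or.inr (Set.mem_iUnion.mpr ⟨i, hiL⟩)
          · rw [← hstar.hedges]
            exact Or.inr (Set.mem_iUnion.mpr ⟨i.val, hx⟩)
      · intro e he
        rw [← hstar.hedges] at he
        rcases he with heK | heL
        · rw [← heu] at heK
          obtain ⟨s, ⟨x, rfl⟩, hx⟩ := heK
          rcases htot x with rfl | ⟨b, hb⟩
          · exact Or.inl hx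
          · exact Or.inr (Set.mem_iUnion.mpr ⟨Sum.inl b,
              (hL'e b e).mpr (Or.inl ((hMe b e).mpr ⟨x, hb, hx⟩))⟩)
        · obtain ⟨s, ⟨i, rfl⟩, hi⟩ := heL
          by_cases hib : ∃ b : Nb, w i ∈ (M b).verts
          · obtain ⟨b, hb⟩ := hib
            exact Or.inr (Set.mem_iUnion.mpr ⟨Sum.inl b, (hL'e b e).mpr (Or.inr ⟨i, hb, hi⟩)⟩)
          · push_neg at hib
            exact Or.inr (Set.mem_iUnion.mpr ⟨Sum.inr ⟨i, hib⟩, hi⟩)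
  · -- strict subset of edges
    rw [Set.ssubset_iff_subset_ne]
    refine ⟨SimpleGraph.Subgraph.edgeSet_mono (hle a), ?_⟩
    intro heq
    have hm2 : Nontrivial (Fin m) := Fin.nontrivial_iff_two_le.mpr h2
    obtain ⟨b, hb⟩ := exists_ne (α := Fin m) a
    obtain ⟨e, he⟩ := hedge b
    have heK : e ∈ K.edgeSet := SimpleGraph.Subgraph.edgeSet_mono (hle b) he
    rw [← heq] at heK
    have : e ∈ (E b).edgeSet ∩ (E a).edgeSet := ⟨he, heK⟩
    rw [hedj b a hb] at this
    exact this
end Step2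
section Main
variable {V : Type*} {G : SimpleGraph V}

lemma main_induction [Fintype V] (v : V) :
    ∀ (N : ℕ) (K : G.Subgraph) (ι : Type) (_ : Fintype ι) (_ : Nonempty ι)
      (L : ι → G.Subgraph), StarConfig G v K L → K.edgeSet.ncard ≤ N →
    (∃ P : Fin 2 → G.Subgraph, IsDecomposition G P ∧ ∀ i, v ∈ (P i).verts) ∨
    (∃ (n : ℕ) (K' : G.Subgraph) (L' : Fin n → G.Subgraph),
      IsDecomposition G (Fin.cons K' L') ∧ IsAtomicGraph K'.coe ∧ v ∈ K'.verts ∧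
      ∀ i, v ∉ (L' i).verts ∧ ((L' i).verts ∩ K'.verts).Nonempty) := by
  intro N
  induction N using Nat.strong_induction_on with
  | _ N ih =>
    intro K ι fι nι L hsc hcard
    by_cases hat : IsAtomicGraph K.coe
    · right
      letI := fι; letI := nι
      exact hsc.toDecomposition hat
    · have hKconn : K.coe.Connected := hsc.hKc.coe
      have hKedge : K.coe.edgeSet.Nonempty := coe_edgeSet_nonempty hsc.hKe
      obtain ⟨m, D', hD'⟩ : ∃ (m : ℕ) (D' : Fin m → K.coe.Subgraph),
          IsDecomposition K.coe D' := by
        by_contra hcon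
        push_neg at hcon
        exact hat ⟨hKconn, hKedge, fun m D' h => hcon m D' h⟩
      have hdecK := coe_decomposition D' hD'
      set E : Fin m → G.Subgraph := fun k => Subgraph.coeSubgraph (D' k) with hE
      obtain ⟨a, hva⟩ : ∃ a, v ∈ (E a).verts := by
        have hvK : v ∈ K.verts := hsc.hvK
        rw [← hdecK.2.2.2.2.2.2.1] at hvK
        exact Set.mem_iUnion.mp hvK
      by_cases hb : ∃ b, b ≠ a ∧ v ∈ (E b).verts
      · obtain ⟨b, hb1, hb2⟩ := hb
        exact Or.inl (step_case1 hsc hdecK hva hb2 (Ne.symm hb1))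
      · push_neg at hb
        have huniq : ∀ k, v ∈ (E k).verts → k = a := by
          intro k hk
          by_contra hka
          exact hb k hka hk
        letI := fι
        obtain ⟨ι2, fι2, nι2, L2, hsc2, hss⟩ := step_case2 hsc hdecK hva huniq
        have hlt : (E a).edgeSet.ncard < K.edgeSet.ncard :=
          Set.ncard_lt_ncard hss (Set.toFinite _)
        exact ih ((E a).edgeSet.ncard) (by omega) (E a) ι2 fι2 nι2 L2 hsc2 le_rfl

theorem decomposition_two_options' [Fintype V]
    (hconn : G.Connected) (hedge : G.edgeSet.Nonempty) (hna : ¬ IsAtomicGraph G)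
    (v : V) :
    (∃ L : Fin 2 → G.Subgraph, IsDecomposition G L ∧ ∀ i, v ∈ (L i).verts) ∨
    (∃ (n : ℕ) (K : G.Subgraph) (L : Fin n → G.Subgraph),
      IsDecomposition G (Fin.cons K L) ∧ IsAtomicGraph K.coe ∧ v ∈ K.verts ∧
      ∀ i, v ∉ (L i).verts ∧ ((L i).verts ∩ K.verts).Nonempty) := by
  classical
  obtain ⟨mD, D, hD⟩ : ∃ (m : ℕ) (D : Fin m → G.Subgraph), IsDecomposition G D := by
    by_contra hcon
    push_neg at hcon
    exact hna ⟨hconn, hedge, fun m D h => hcon m D h⟩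
  have hbase : StarConfig G v (⊤ : G.Subgraph) (fun i : Empty => i.elim) := by
    refine ⟨?_, top_subgraph_connected hconn, ?_, fun i => i.elim, fun i => i.elim,
      fun i => i.elim, fun i => i.elim, fun i => i.elim, fun i => i.elim,
      fun i => i.elim, fun i => i.elim, ?_, ?_⟩
    · rw [SimpleGraph.Subgraph.verts_top]; trivial
    · rw [SimpleGraph.Subgraph.edgeSet_top]; exact hedge
    · rw [SimpleGraph.Subgraph.verts_top]; simp
    · rw [SimpleGraph.Subgraph.edgeSet_top]; simp
  obtain ⟨a, hva⟩ : ∃ a, v ∈ (D a).verts := by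
    have hvK : v ∈ (⊤ : G.Subgraph).verts := by
      rw [SimpleGraph.Subgraph.verts_top]; trivial
    rw [← hD.2.2.2.2.2.2.1] at hvK
    exact Set.mem_iUnion.mp hvK
  by_cases hb : ∃ b, b ≠ a ∧ v ∈ (D b).verts
  · obtain ⟨b, hb1, hb2⟩ := hb
    exact Or.inl (step_case1 hbase hD hva hb2 (Ne.symm hb1))
  · push_neg at hb
    have huniq : ∀ k, v ∈ (D k).verts → k = a := by
      intro k hk
      by_contra hka
      exact hb k hka hk
    obtain ⟨ι2, fι2, nι2, L2, hsc2, hss⟩ := step_case2 hbase hD hva huniq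
    exact main_induction v ((D a).edgeSet.ncard) (D a) ι2 fι2 nι2 L2 hsc2 le_rfl
end Main

/-- For a vertex `v` of a connected non-atomic graph `G`, either (1) `G` admits a
decomposition into two subgraphs both containing `v`, or (2) `G` admits a decomposition
`{K, L 0, …, L (n-1)}` where `K` is atomic (as a graph), `v ∈ K`, `v` lies in no `L i`,
and every `L i` shares a vertex with `K` (the decomposition graph is a star
centered at `K`). -/
theorem decomposition_two_options {V : Type*} [Fintype V] (G : SimpleGraph V)
    (hconn : G.Connected) (hedge : G.edgeSet.Nonempty) (hna : ¬ IsAtomicGraph G)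
    (v : V) :
    (∃ L : Fin 2 → G.Subgraph, IsDecomposition G L ∧ ∀ i, v ∈ (L i).verts) ∨
    (∃ (n : ℕ) (K : G.Subgraph) (L : Fin n → G.Subgraph),
      IsDecomposition G (Fin.cons K L) ∧ IsAtomicGraph K.coe ∧ v ∈ K.verts ∧
      ∀ i, v ∉ (L i).verts ∧ ((L i).verts ∩ K.verts).Nonempty) :=
  decomposition_two_options' hconn hedge hna v
end

section
/- Let G be a connected atomic finite simple graph and let X be a connected subgraph of G containing at least one edge, such that some vertex of G does not belong to X. Then there exist an edge e = {u,v} of G with u a vertex of X and v not a vertex of X, and a path in G from v to some vertex of X that does not pass through u and does not use the edge e. -/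
open SimpleGraph

/-! ### Auxiliary machinery -/

section Aux

variable {V : Type*} (G : SimpleGraph V) (X : G.Subgraph)

/-- The star graph on `Fin (k+1)` with center `0`. -/
def starG (k : ℕ) : SimpleGraph (Fin (k + 1)) where
  Adj i j := i ≠ j ∧ (i = 0 ∨ j = 0)
  symm := ⟨fun i j h => ⟨h.1.symm, h.2.symm⟩⟩
  loopless := ⟨fun i h => h.1 rfl⟩

lemma starG_isTree (k : ℕ) : (starG k).IsTree := by
  have h0 : ∀ j : Fin (k+1), j ≠ 0 → (starG k).Adj 0 j := fun j hj => ⟨Ne.symm hj, Or.inl rfl⟩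
  constructor
  · have hr : ∀ i : Fin (k+1), (starG k).Reachable i 0 := by
      intro i
      by_cases h : i = 0
      · rw [h]
      · exact ((h0 i h).reachable).symm
    exact ⟨fun i j => (hr i).trans (hr j).symm⟩
  · intro v c hc
    have h0mem : (0 : Fin (k+1)) ∈ c.support := by
      cases c with
      | nil => exact absurd hc Walk.IsCycle.not_of_nil
      | cons h q =>
        rcases h.2 with h' | h'
        · rw [← h']; exact Walk.start_mem_support _
        · rw [← h']
          rw [Walk.support_cons]
          exact List.mem_cons_of_mem _ (Walk.start_mem_support _)
    have hc' := hc.rotate h0mem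
    set c' := c.rotate _ h0mem with hcdef
    clear_value c'
    clear hcdef hc h0mem
    cases c' with
    | nil => exact absurd hc' Walk.IsCycle.not_of_nil
    | cons h1 q1 =>
      rw [Walk.cons_isCycle_iff] at hc'
      obtain ⟨hq1, hedge⟩ := hc'
      have ha : _ ≠ (0 : Fin (k+1)) := Ne.symm h1.1
      cases q1 with
      | nil => exact ha rfl
      | cons h2 q2 =>
        have hb : _ = (0 : Fin (k+1)) := h2.2.resolve_left ha
        subst hb
        rw [Walk.cons_isPath_iff] at hq1
        rw [Walk.isPath_iff_eq_nil] at hq1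
        rw [hq1.1] at hedge
        apply hedge
        simp [Sym2.eq_swap]

/-- Induced-style subgraph on a set of vertices. -/
def pieceSub (s : Set V) : G.Subgraph where
  verts := s
  Adj a b := a ∈ s ∧ b ∈ s ∧ G.Adj a b
  adj_sub h := h.2.2
  edge_vert h := h.1
  symm := ⟨fun a b h => ⟨h.2.1, h.1, h.2.2.symm⟩⟩

lemma pieceSub_reach {s : Set V} : ∀ {a b : V} (p : G.Walk a b)
    (hp : ∀ z ∈ p.support, z ∈ s),
    (pieceSub G s).coe.Reachable ⟨a, hp a p.start_mem_support⟩ ⟨b, hp b p.end_mem_support⟩ := by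
  intro a b p
  induction p with
  | nil => intro hp; rfl
  | cons h q ih =>
    intro hp
    have hmem : ∀ z ∈ q.support, z ∈ s := by
      intro z hz
      exact hp z (by rw [Walk.support_cons]; exact List.mem_cons_of_mem _ hz)
    have hadj : (pieceSub G s).coe.Adj ⟨_, hp _ (Walk.start_mem_support _)⟩
        ⟨_, hmem _ (Walk.start_mem_support _)⟩ :=
      ⟨hp _ (Walk.start_mem_support _), hmem _ (Walk.start_mem_support _), h⟩
    exact hadj.reachable.trans (ih hmem)

/-- Connectivity through the exterior of `X`. -/
def GOut (v w : V) : Prop := ∃ p : G.Walk v w, ∀ z ∈ p.support, z ∉ X.verts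

/-- The territory of `u`: exterior vertices reachable from a neighbor of `u`
through the exterior. -/
def GTer (u : V) : Set V := {w | ∃ v, G.Adj u v ∧ GOut G X v w}

variable {G X}

lemma gout_left {v w : V} (h : GOut G X v w) : v ∉ X.verts := by
  obtain ⟨p, hp⟩ := h; exact hp v p.start_mem_support

lemma gout_right {v w : V} (h : GOut G X v w) : w ∉ X.verts := by
  obtain ⟨p, hp⟩ := h; exact hp w p.end_mem_support

lemma gout_refl {v : V} (h : v ∉ X.verts) : GOut G X v v :=
  ⟨Walk.nil, by intro z hz; rw [Walk.support_nil, List.mem_singleton] at hz; rwa [hz]⟩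

lemma gout_extend {v w z : V} (h : GOut G X v w) (ha : G.Adj w z) (hz : z ∉ X.verts) :
    GOut G X v z := by
  obtain ⟨p, hp⟩ := h
  refine ⟨p.concat ha, ?_⟩
  intro y hy
  rw [Walk.support_concat, List.mem_append, List.mem_singleton] at hy
  rcases hy with hy | rfl
  · exact hp y hy
  · exact hz

lemma gout_support {v w z : V} (h : GOut G X v w) : ∀ (p : G.Walk v w),
    (∀ y ∈ p.support, y ∉ X.verts) → z ∈ p.support → GOut G X v z := by
  classical
  intro p hp hz
  exact ⟨p.takeUntil z hz, fun y hy => hp y (Walk.support_takeUntil_subset p hz hy)⟩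

lemma gter_not_mem {u w : V} (h : w ∈ GTer G X u) : w ∉ X.verts := by
  obtain ⟨v, _, hout⟩ := h; exact gout_right hout

lemma gter_extend {u w z : V} (h : w ∈ GTer G X u) (ha : G.Adj w z) (hz : z ∉ X.verts) :
    z ∈ GTer G X u := by
  obtain ⟨v, hadj, hout⟩ := h
  exact ⟨v, hadj, gout_extend hout ha hz⟩

/-- Key separation lemma: under the no-escape hypothesis, territories of distinct
attachment vertices are disjoint. -/
lemma gter_disjoint
    (hN : ∀ (u v x : V) (q : G.Walk v x), u ∈ X.verts → G.Adj u v → v ∉ X.verts →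
      x ∈ X.verts → u ∈ q.support)
    {u u' : V} (hu : u ∈ X.verts) (hu' : u' ∈ X.verts) (hne : u ≠ u') :
    GTer G X u ∩ GTer G X u' = ∅ := by
  rw [Set.eq_empty_iff_forall_notMem]
  rintro w ⟨⟨v, hav, p, hp⟩, ⟨v', hav', p', hp'⟩⟩
  have hq := hN u v u' ((p.append p'.reverse).concat hav'.symm) hu hav
    (hp v p.start_mem_support) hu'
  rw [Walk.support_concat, List.mem_append, List.mem_singleton] at hq
  rcases hq with hq | rfl
  · rw [Walk.mem_support_append_iff] at hq
    rcases hq with hq | hq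
    · exact hp u hq hu
    · rw [Walk.support_reverse, List.mem_reverse] at hq
      exact hp' u hq hu
  · exact hne rfl

/-- Every exterior vertex lies in the territory of some vertex of `X`. -/
lemma exists_gter : ∀ {w x : V} (_ : G.Walk w x), x ∈ X.verts → w ∉ X.verts →
    ∃ u ∈ X.verts, w ∈ GTer G X u := by
  intro w x q
  induction q with
  | nil => intro hx hw; exact absurd hx hw
  | cons h q ih =>
    intro hx ha
    rename_i a b c
    by_cases hb : b ∈ X.verts
    · exact ⟨b, hb, a, h.symm, gout_refl ha⟩
    · obtain ⟨u, hu, v0, hadj, hout⟩ := ih hx hb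
      exact ⟨u, hu, v0, hadj, gout_extend hout h.symm ha⟩

end Aux

/-- In a connected atomic graph `G`, for any connected subgraph `X` with at least one
edge which does not contain all vertices, there is an edge `{u, v}` of `G` with
`u ∈ X` and `v ∉ X`, together with a path in `G` from `v` back to some vertex of `X`
which avoids the vertex `u` (and in particular does not use the edge `{u, v}`). -/
theorem atomic_escape_path {V : Type*} [Fintype V] (G : SimpleGraph V)
    (hatom : IsAtomicGraph G)
    (X : G.Subgraph) (hXconn : X.Connected) (hXedge : X.edgeSet.Nonempty)
    (hout : ∃ w : V, w ∉ X.verts) :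
    ∃ u v : V, u ∈ X.verts ∧ v ∉ X.verts ∧ G.Adj u v ∧
      ∃ (x : V) (p : G.Walk v x), x ∈ X.verts ∧ p.IsPath ∧
        u ∉ p.support ∧ s(u, v) ∉ p.edges := by
  classical
  by_contra hcon
  -- Derive the "no escape walk" hypothesis.
  have hN : ∀ (u v x : V) (q : G.Walk v x), u ∈ X.verts → G.Adj u v → v ∉ X.verts →
      x ∈ X.verts → u ∈ q.support := by
    intro u v x q hu hadj hv hx
    by_contra hus
    exact hcon ⟨u, v, hu, hv, hadj, x, q.bypass, hx, q.bypass_isPath,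
      fun h => hus (q.support_bypass_subset h),
      fun he => hus (q.support_bypass_subset (q.bypass.fst_mem_support_of_mem_edges he))⟩
  obtain ⟨w0, hw0⟩ := hout
  have hpre : G.Preconnected := hatom.1.preconnected
  -- X has a vertex
  obtain ⟨e0, he0⟩ := hXedge
  have hWne : ∃ x, x ∈ X.verts := by
    induction e0 using Sym2.ind with
    | _ a b => exact ⟨a, X.edge_vert he0⟩
  obtain ⟨x0, hx0⟩ := hWne
  obtain ⟨q0⟩ := hpre w0 x0
  obtain ⟨u0, hu0, hw0T⟩ := exists_gter q0 hx0 hw0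
  -- the set of attachment vertices
  set S : Set V := {u | u ∈ X.verts ∧ (GTer G X u).Nonempty} with hSdef
  have hu0S : u0 ∈ S := ⟨hu0, w0, hw0T⟩
  haveI : Fintype ↥S := Fintype.ofFinite _
  set k := Fintype.card ↥S with hk
  have hkpos : 0 < k := Fintype.card_pos_iff.mpr ⟨⟨u0, hu0S⟩⟩
  set e : Fin k ≃ ↥S := (Fintype.equivFin ↥S).symm with hedef
  set P : V → G.Subgraph := fun u => pieceSub G (insert u (GTer G X u)) with hPdef
  set X' : G.Subgraph := pieceSub G X.verts with hX'def
  set D : Fin (k+1) → G.Subgraph := Fin.cons X' (fun i => P (e i)) with hDdef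
  -- basic facts
  have hD0 : D 0 = X' := rfl
  have hDs : ∀ i : Fin k, D i.succ = P (e i) := fun i => rfl
  have hvertsP : ∀ u, (P u).verts = insert u (GTer G X u) := fun u => rfl
  have hvertsX' : X'.verts = X.verts := rfl
  -- disjointness of piece vertex sets
  have hVd : ∀ u u' : V, u ∈ X.verts → u' ∈ X.verts → u ≠ u' →
      (insert u (GTer G X u)) ∩ (insert u' (GTer G X u')) = ∅ := by
    intro u u' hu hu' hne
    rw [Set.eq_empty_iff_forall_notMem]
    rintro a ⟨ha, ha'⟩
    rcases Set.mem_insert_iff.mp ha with rfl | ha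
    · rcases Set.mem_insert_iff.mp ha' with rfl | ha'
      · exact hne rfl
      · exact gter_not_mem ha' hu
    · rcases Set.mem_insert_iff.mp ha' with rfl | ha'
      · exact gter_not_mem ha hu'
      · have := Set.eq_empty_iff_forall_notMem.mp (gter_disjoint hN hu hu' hne) a
        exact this ⟨ha, ha'⟩
  -- X' ∩ piece verts ⊆ {u}
  have hXP : ∀ u : V, X.verts ∩ insert u (GTer G X u) ⊆ {u} := by
    rintro u a ⟨haX, ha⟩
    rcases Set.mem_insert_iff.mp ha with rfl | ha
    · rfl
    · exact absurd haX (gter_not_mem ha)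
  apply hatom.2.2 (k+1) D
  refine ⟨by omega, fun i => le_top, ?_, ?_, ?_, ?_, ?_, ?_, ?_⟩
  · -- connectivity
    intro i
    induction i using Fin.cases with
    | zero =>
      rw [hD0]
      have hle : X ≤ X' := ⟨Set.Subset.rfl, fun a b hab =>
        ⟨X.edge_vert hab, X.edge_vert hab.symm, X.adj_sub hab⟩⟩
      exact SimpleGraph.Subgraph.Connected.mono hle rfl hXconn
    | succ i =>
      rw [hDs]
      obtain ⟨hu, hTne⟩ := (e i).2
      set u : V := ↑(e i)
      rw [SimpleGraph.Subgraph.connected_iff]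
      constructor
      · constructor
        have hru : ∀ (a : V) (ha : a ∈ (P u).verts),
            (P u).coe.Reachable ⟨a, ha⟩ ⟨u, Set.mem_insert _ _⟩ := by
          intro a ha
          rcases Set.mem_insert_iff.mp ha with rfl | haT
          · rfl
          · obtain ⟨v, hadj, hout⟩ := haT
            obtain ⟨p, hp⟩ := hout
            have hsup : ∀ z ∈ (Walk.cons hadj p).support, z ∈ insert u (GTer G X u) := by
              intro z hz
              rw [Walk.support_cons] at hz
              rcases List.mem_cons.mp hz with rfl | hz
              · exact Set.mem_insert _ _
              · exact Set.mem_insert_of_mem _ ⟨v, hadj, gout_support ⟨p, hp⟩ p hp hz⟩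
            exact (pieceSub_reach G (Walk.cons hadj p) hsup).symm
        intro a b
        exact (hru a a.2).trans (hru b b.2).symm
      · exact ⟨u, Set.mem_insert _ _⟩
  · -- each piece has an edge
    intro i
    induction i using Fin.cases with
    | zero =>
      rw [hD0]
      refine ⟨e0, ?_⟩
      induction e0 using Sym2.ind with
      | _ a b =>
        rw [SimpleGraph.Subgraph.mem_edgeSet] at he0 ⊢
        exact ⟨X.edge_vert he0, X.edge_vert he0.symm, X.adj_sub he0⟩
    | succ i =>
      rw [hDs]
      obtain ⟨hu, w, v, hadj, hout⟩ := (e i).2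
      refine ⟨s(↑(e i), v), ?_⟩
      rw [SimpleGraph.Subgraph.mem_edgeSet]
      exact ⟨Set.mem_insert _ _,
        Set.mem_insert_of_mem _ ⟨v, hadj, gout_refl (gout_left hout)⟩, hadj⟩
  · -- edge disjointness
    intro i j hij
    rw [Set.eq_empty_iff_forall_notMem]
    intro ε hε
    induction ε using Sym2.ind with
    | _ a b =>
      obtain ⟨h1, h2⟩ := hε
      -- helper : an edge of D i has both endpoints in (D i).verts
      have hend : ∀ (m : Fin (k+1)), s(a,b) ∈ (D m).edgeSet → a ∈ (D m).verts ∧ b ∈ (D m).verts := by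
        intro m hm
        rw [SimpleGraph.Subgraph.mem_edgeSet] at hm
        exact ⟨(D m).edge_vert hm, (D m).edge_vert hm.symm⟩
      have hGa : G.Adj a b := (D i).adj_sub (SimpleGraph.Subgraph.mem_edgeSet.mp h1)
      induction i using Fin.cases with
      | zero =>
        induction j using Fin.cases with
        | zero => exact hij rfl
        | succ j =>
          obtain ⟨haX, hbX⟩ := hend 0 h1
          obtain ⟨haP, hbP⟩ := hend j.succ h2
          rw [hDs] at haP hbP
          have ha' := hXP ↑(e j) ⟨haX, haP⟩
          have hb' := hXP ↑(e j) ⟨hbX, hbP⟩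
          exact hGa.ne (ha'.trans hb'.symm)
      | succ i =>
        induction j using Fin.cases with
        | zero =>
          obtain ⟨haX, hbX⟩ := hend 0 h2
          obtain ⟨haP, hbP⟩ := hend i.succ h1
          rw [hDs] at haP hbP
          have ha' := hXP ↑(e i) ⟨haX, haP⟩
          have hb' := hXP ↑(e i) ⟨hbX, hbP⟩
          exact hGa.ne (ha'.trans hb'.symm)
        | succ j =>
          have hij' : i ≠ j := fun h => hij (by rw [h])
          have hee : (↑(e i) : V) ≠ ↑(e j) := by
            intro h
            exact hij' (e.injective (Subtype.ext h))
          obtain ⟨haP, _⟩ := hend i.succ h1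
          obtain ⟨haP', _⟩ := hend j.succ h2
          rw [hDs] at haP haP'
          have := Set.eq_empty_iff_forall_notMem.mp
            (hVd ↑(e i) ↑(e j) (e i).2.1 (e j).2.1 hee) a
          exact this ⟨haP, haP'⟩
  · -- vertex intersections are subsingletons
    intro i j hij
    induction i using Fin.cases with
    | zero =>
      induction j using Fin.cases with
      | zero => exact absurd rfl hij
      | succ j =>
        intro a ha b hb
        rw [hD0, hDs] at ha hb
        have h1 : a ∈ ({(↑(e j) : V)} : Set V) := hXP ↑(e j) ha
        have h2 : b ∈ ({(↑(e j) : V)} : Set V) := hXP ↑(e j) hb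
        rw [Set.mem_singleton_iff] at h1 h2
        rw [h1, h2]
    | succ i =>
      induction j using Fin.cases with
      | zero =>
        intro a ha b hb
        rw [hD0, hDs] at ha hb
        have h1 : a ∈ ({(↑(e i) : V)} : Set V) := hXP ↑(e i) ⟨ha.2, ha.1⟩
        have h2 : b ∈ ({(↑(e i) : V)} : Set V) := hXP ↑(e i) ⟨hb.2, hb.1⟩
        rw [Set.mem_singleton_iff] at h1 h2
        rw [h1, h2]
      | succ j =>
        have hij' : i ≠ j := fun h => hij (by rw [h])
        have hee : (↑(e i) : V) ≠ ↑(e j) := fun h => hij' (e.injective (Subtype.ext h))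
        rw [hDs, hDs]
        rw [hvertsP, hvertsP, hVd ↑(e i) ↑(e j) (e i).2.1 (e j).2.1 hee]
        exact Set.subsingleton_empty
  · -- vertex cover
    rw [SimpleGraph.Subgraph.verts_top]
    rw [Set.eq_univ_iff_forall]
    intro a
    rw [Set.mem_iUnion]
    by_cases ha : a ∈ X.verts
    · exact ⟨0, ha⟩
    · obtain ⟨q⟩ := hpre a x0
      obtain ⟨u, hu, haT⟩ := exists_gter q hx0 ha
      have huS : u ∈ S := ⟨hu, a, haT⟩
      refine ⟨(e.symm ⟨u, huS⟩).succ, ?_⟩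
      rw [hDs, hvertsP]
      rw [Equiv.apply_symm_apply]
      exact Set.mem_insert_of_mem _ haT
  · -- edge cover
    rw [SimpleGraph.Subgraph.edgeSet_top]
    apply Set.Subset.antisymm
    · refine Set.iUnion_subset fun i => ?_
      intro ε hε
      induction ε using Sym2.ind with
      | _ a b => exact (D i).adj_sub (SimpleGraph.Subgraph.mem_edgeSet.mp hε)
    · intro ε hε
      induction ε using Sym2.ind with
      | _ a b =>
        rw [SimpleGraph.mem_edgeSet] at hε
        rw [Set.mem_iUnion]
        by_cases ha : a ∈ X.verts
        · by_cases hb : b ∈ X.verts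
          · exact ⟨0, SimpleGraph.Subgraph.mem_edgeSet.mpr ⟨ha, hb, hε⟩⟩
          · -- b in territory of a
            have hbT : b ∈ GTer G X a := ⟨b, hε, gout_refl hb⟩
            have haS : a ∈ S := ⟨ha, b, hbT⟩
            refine ⟨(e.symm ⟨a, haS⟩).succ, ?_⟩
            rw [hDs]
            rw [SimpleGraph.Subgraph.mem_edgeSet, hPdef]
            rw [Equiv.apply_symm_apply]
            exact ⟨Set.mem_insert _ _, Set.mem_insert_of_mem _ hbT, hε⟩
        · by_cases hb : b ∈ X.verts
          · have haT : a ∈ GTer G X b := ⟨a, hε.symm, gout_refl ha⟩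
            have hbS : b ∈ S := ⟨hb, a, haT⟩
            refine ⟨(e.symm ⟨b, hbS⟩).succ, ?_⟩
            rw [hDs]
            rw [SimpleGraph.Subgraph.mem_edgeSet, hPdef]
            rw [Equiv.apply_symm_apply]
            exact ⟨Set.mem_insert_of_mem _ haT, Set.mem_insert _ _, hε⟩
          · obtain ⟨q⟩ := hpre a x0
            obtain ⟨u, hu, haT⟩ := exists_gter q hx0 ha
            have hbT : b ∈ GTer G X u := gter_extend haT hε hb
            have huS : u ∈ S := ⟨hu, a, haT⟩
            refine ⟨(e.symm ⟨u, huS⟩).succ, ?_⟩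
            rw [hDs]
            rw [SimpleGraph.Subgraph.mem_edgeSet, hPdef]
            rw [Equiv.apply_symm_apply]
            exact ⟨Set.mem_insert_of_mem _ haT, Set.mem_insert_of_mem _ hbT, hε⟩
  · -- tree
    have hstar : decompGraph D = starG k := by
      ext i j
      induction i using Fin.cases with
      | zero =>
        induction j using Fin.cases with
        | zero =>
          constructor
          · rintro ⟨hij, -⟩; exact absurd rfl hij
          · rintro ⟨hij, -⟩; exact absurd rfl hij
        | succ j =>
          refine iff_of_true ⟨(Fin.succ_ne_zero j).symm, ?_⟩
            ⟨(Fin.succ_ne_zero j).symm, Or.inl rfl⟩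
          exact ⟨↑(e j), (e j).2.1, by rw [hDs, hvertsP]; exact Set.mem_insert _ _⟩
      | succ i =>
        induction j using Fin.cases with
        | zero =>
          refine iff_of_true ⟨Fin.succ_ne_zero i, ?_⟩
            ⟨Fin.succ_ne_zero i, Or.inr rfl⟩
          exact ⟨↑(e i), by rw [hDs, hvertsP]; exact Set.mem_insert _ _, (e i).2.1⟩
        | succ j =>
          refine iff_of_false ?_ ?_
          · rintro ⟨hij, hmeet⟩
            have hij' : i ≠ j := fun h => hij (by rw [h])
            have hee : (↑(e i) : V) ≠ ↑(e j) := fun h => hij' (e.injective (Subtype.ext h))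
            rw [hDs, hDs, hvertsP, hvertsP,
              hVd ↑(e i) ↑(e j) (e i).2.1 (e j).2.1 hee] at hmeet
            exact Set.not_nonempty_empty hmeet
          · rintro ⟨-, h0 | h0⟩
            · exact Fin.succ_ne_zero i h0
            · exact Fin.succ_ne_zero j h0
    rw [hstar]
    exact starG_isTree k
end
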